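/- The number of legal histories of the Cyclical Three Rows Game on n columns (n ≥ 3) is 3^n - 2^n - n. In particular, the number of illegal histories is 2^n + n. Formally, with histories elements of {T, M, B}^n (the last coordinate being the cycle choice), a history is illegal if and only if it satisfies one of: (1) all path choices (first n-1 coordinates) are T and the cycle choice is M or B; (2) exactly one path choice is M, the rest are T, and the cycle choice is B; (3) all path choices are in {M, B} with at least one B, and the cycle choice is T or M; (4) all path choices are M and the cycle choice is T. -/

import Mathlib

/-- A history of the Cyclical Three Rows Game on `n + 1` columns is `h : Fin (n+1) → Fin 3`,
with `0` = top (T), `1` = middle (M), `2` = bottom (B); coordinates `< n` are the path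
choices and the last coordinate is the cycle choice.  `Illegal n h` holds iff `h`
satisfies one of the four illegality conditions. -/
def Illegal (n : ℕ) (h : Fin (n + 1) → Fin 3) : Prop :=
  ((∀ i : Fin (n + 1), (i : ℕ) < n → h i = 0) ∧ (h (Fin.last n) = 1 ∨ h (Fin.last n) = 2)) ∨
  ((∃ i : Fin (n + 1), (i : ℕ) < n ∧ h i = 1 ∧
      ∀ j : Fin (n + 1), (j : ℕ) < n → j ≠ i → h j = 0) ∧ h (Fin.last n) = 2) ∨
  ((∀ i : Fin (n + 1), (i : ℕ) < n → h i = 1 ∨ h i = 2) ∧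
      (∃ i : Fin (n + 1), (i : ℕ) < n ∧ h i = 2) ∧
      (h (Fin.last n) = 0 ∨ h (Fin.last n) = 1)) ∨
  ((∀ i : Fin (n + 1), (i : ℕ) < n → h i = 1) ∧ h (Fin.last n) = 0)

open Finset

namespace CyclicalAux

instance (n : ℕ) : DecidablePred (Illegal n) := fun h => by
  unfold Illegal; infer_instance

variable {n : ℕ}

lemma forall_lt_iff (C : Fin (n+1) → Prop) :
    (∀ i : Fin (n+1), (i : ℕ) < n → C i) ↔ ∀ j : Fin n, C j.castSucc := by
  constructor
  · intro H j; exact H j.castSucc (by simp)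
  · intro H i hi
    have e : (⟨(i : ℕ), hi⟩ : Fin n).castSucc = i := Fin.ext rfl
    exact e ▸ H ⟨(i : ℕ), hi⟩

lemma exists_lt_iff (C : Fin (n+1) → Prop) :
    (∃ i : Fin (n+1), (i : ℕ) < n ∧ C i) ↔ ∃ j : Fin n, C j.castSucc := by
  constructor
  · rintro ⟨i, hi, hC⟩
    have e : (⟨(i : ℕ), hi⟩ : Fin n).castSucc = i := Fin.ext rfl
    exact ⟨⟨(i : ℕ), hi⟩, e.symm ▸ hC⟩
  · rintro ⟨j, hC⟩; exact ⟨j.castSucc, by simp, hC⟩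

/-- The three slice predicates (conditions on the path part, per cycle choice). -/
def Q0 (n : ℕ) (g : Fin n → Fin 3) : Prop := ∀ j, g j = 1 ∨ g j = 2

def Q1 (n : ℕ) (g : Fin n → Fin 3) : Prop :=
  (∀ j, g j = 0) ∨ ((∀ j, g j = 1 ∨ g j = 2) ∧ ∃ j, g j = 2)

def Q2 (n : ℕ) (g : Fin n → Fin 3) : Prop :=
  (∀ j, g j = 0) ∨ (∃ j, g j = 1 ∧ ∀ k, k ≠ j → g k = 0)

instance : DecidablePred (Q0 n) := fun g => by unfold Q0; infer_instance
instance : DecidablePred (Q1 n) := fun g => by unfold Q1; infer_instance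
instance : DecidablePred (Q2 n) := fun g => by unfold Q2; infer_instance

lemma slice_card (P : (Fin n → Fin 3) → Prop) [DecidablePred P] (c : Fin 3) :
    (univ.filter (fun h : Fin (n+1) → Fin 3 =>
      P (fun j : Fin n => h j.castSucc) ∧ h (Fin.last n) = c)).card
      = (univ.filter P).card := by
  apply Finset.card_nbij' (fun h => fun j : Fin n => h j.castSucc)
    (fun g => Fin.snoc g c)
  · intro h hh
    simp only [mem_coe, mem_filter, mem_univ, true_and] at *
    exact hh.1
  · intro g hg
    simp only [mem_coe, mem_filter, mem_univ, true_and, Fin.snoc_castSucc, Fin.snoc_last] at *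
    exact ⟨hg, trivial⟩
  · intro h hh
    simp only [mem_coe, mem_filter, mem_univ, true_and] at hh
    have : (fun j : Fin n => h j.castSucc) = Fin.init h := rfl
    show Fin.snoc (fun j : Fin n => h j.castSucc) c = h
    rw [this, ← hh.2, Fin.snoc_init_self]
  · intro g _
    funext j; simp [Fin.snoc_castSucc]

lemma card_allEq (a : Fin 3) :
    (univ.filter fun g : Fin n → Fin 3 => ∀ j, g j = a).card = 1 := by
  have : (univ.filter fun g : Fin n → Fin 3 => ∀ j, g j = a) = {fun _ => a} := by
    ext g; simp [funext_iff]
  rw [this, card_singleton]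

lemma card_all12 :
    (univ.filter fun g : Fin n → Fin 3 => ∀ j, g j = 1 ∨ g j = 2).card = 2 ^ n := by
  rw [← Fintype.card_subtype]
  rw [Fintype.card_congr (Equiv.subtypePiEquivPi (p := fun (_ : Fin n) (x : Fin 3) => x = 1 ∨ x = 2))]
  rw [Fintype.card_pi]
  have : Fintype.card {x : Fin 3 // x = 1 ∨ x = 2} = 2 := by decide
  simp [this]

lemma card_oneM :
    (univ.filter fun g : Fin n → Fin 3 =>
      ∃ j, g j = 1 ∧ ∀ k, k ≠ j → g k = 0).card = n := by
  have himg : (univ.filter fun g : Fin n → Fin 3 =>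
      ∃ j, g j = 1 ∧ ∀ k, k ≠ j → g k = 0)
      = univ.image (fun j : Fin n => fun k => if k = j then (1 : Fin 3) else 0) := by
    ext g
    simp only [mem_filter, mem_univ, true_and, mem_image]
    constructor
    · rintro ⟨j, h1, h0⟩
      refine ⟨j, ?_⟩
      funext k
      by_cases hk : k = j
      · simp [hk, h1]
      · simp [hk, h0 k hk]
    · rintro ⟨j, rfl⟩
      exact ⟨j, by simp, fun k hk => by simp [hk]⟩
  rw [himg, Finset.card_image_of_injective _ ?_, card_univ, Fintype.card_fin]
  intro j j' hjj
  by_contra hne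
  have h1 := congrFun hjj j
  simp [hne] at h1

lemma all12_split (g : Fin n → Fin 3) :
    (∀ j, g j = 1 ∨ g j = 2) ↔
      ((∀ j, g j = 1 ∨ g j = 2) ∧ ∃ j, g j = 2) ∨ (∀ j, g j = 1) := by
  constructor
  · intro H
    by_cases he : ∃ j, g j = 2
    · exact Or.inl ⟨H, he⟩
    · exact Or.inr fun j => (H j).resolve_right fun h2 => he ⟨j, h2⟩
  · rintro (⟨H, _⟩ | H) j
    · exact H j
    · exact Or.inl (H j)

lemma card_Q1 (hn : 0 < n) : (univ.filter (Q1 n)).card = 2 ^ n := by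
  classical
  have hQ : univ.filter (Q1 n) =
      (univ.filter fun g : Fin n → Fin 3 => ∀ j, g j = 0) ∪
      (univ.filter fun g : Fin n → Fin 3 => (∀ j, g j = 1 ∨ g j = 2) ∧ ∃ j, g j = 2) := by
    ext g; simp only [mem_filter, mem_univ, true_and, mem_union]; rfl
  have hdisj : Disjoint
      (univ.filter fun g : Fin n → Fin 3 => ∀ j, g j = 0)
      (univ.filter fun g : Fin n → Fin 3 => (∀ j, g j = 1 ∨ g j = 2) ∧ ∃ j, g j = 2) := by
    rw [Finset.disjoint_left]
    intro g hg hg'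
    simp only [mem_filter, mem_univ, true_and] at hg hg'
    rcases hg'.1 ⟨0, hn⟩ with h | h <;> rw [hg ⟨0, hn⟩] at h <;> exact absurd h (by decide)
  have hsplit : (univ.filter fun g : Fin n → Fin 3 => ∀ j, g j = 1 ∨ g j = 2)
      = (univ.filter fun g : Fin n → Fin 3 => (∀ j, g j = 1 ∨ g j = 2) ∧ ∃ j, g j = 2) ∪
        (univ.filter fun g : Fin n → Fin 3 => ∀ j, g j = 1) := by
    ext g
    simp only [mem_filter, mem_univ, true_and, mem_union]
    exact all12_split g
  have hdisj2 : Disjoint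
      (univ.filter fun g : Fin n → Fin 3 => (∀ j, g j = 1 ∨ g j = 2) ∧ ∃ j, g j = 2)
      (univ.filter fun g : Fin n → Fin 3 => ∀ j, g j = 1) := by
    rw [Finset.disjoint_left]
    intro g hg hg'
    simp only [mem_filter, mem_univ, true_and] at hg hg'
    obtain ⟨j, hj⟩ := hg.2
    rw [hg' j] at hj
    exact absurd hj (by decide)
  have h1 := card_all12 (n := n)
  rw [hsplit, card_union_of_disjoint hdisj2, card_allEq] at h1
  rw [hQ, card_union_of_disjoint hdisj, card_allEq, add_comm]
  exact h1

lemma card_Q2 (hn : 0 < n) : (univ.filter (Q2 n)).card = n + 1 := by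
  classical
  have hQ : univ.filter (Q2 n) =
      (univ.filter fun g : Fin n → Fin 3 => ∀ j, g j = 0) ∪
      (univ.filter fun g : Fin n → Fin 3 => ∃ j, g j = 1 ∧ ∀ k, k ≠ j → g k = 0) := by
    ext g; simp only [mem_filter, mem_univ, true_and, mem_union]; rfl
  have hdisj : Disjoint
      (univ.filter fun g : Fin n → Fin 3 => ∀ j, g j = 0)
      (univ.filter fun g : Fin n → Fin 3 => ∃ j, g j = 1 ∧ ∀ k, k ≠ j → g k = 0) := by
    rw [Finset.disjoint_left]
    intro g hg hg'
    simp only [mem_filter, mem_univ, true_and] at hg hg'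
    obtain ⟨j, hj, -⟩ := hg'
    rw [hg j] at hj
    exact absurd hj (by decide)
  rw [hQ, card_union_of_disjoint hdisj, card_allEq, card_oneM, add_comm]

lemma illegal_iff (h : Fin (n+1) → Fin 3) :
    Illegal n h ↔
      ((Q0 n (fun j : Fin n => h j.castSucc) ∧ h (Fin.last n) = 0) ∨
       (Q1 n (fun j : Fin n => h j.castSucc) ∧ h (Fin.last n) = 1) ∨
       (Q2 n (fun j : Fin n => h j.castSucc) ∧ h (Fin.last n) = 2)) := by
  have h3 : ∀ c : Fin 3, c = 0 ∨ c = 1 ∨ c = 2 := by decide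
  have e01 : (0 : Fin 3) ≠ 1 := by decide
  have e02 : (0 : Fin 3) ≠ 2 := by decide
  have e10 : (1 : Fin 3) ≠ 0 := by decide
  have e12 : (1 : Fin 3) ≠ 2 := by decide
  have e20 : (2 : Fin 3) ≠ 0 := by decide
  have e21 : (2 : Fin 3) ≠ 1 := by decide
  have hsp := all12_split (fun j : Fin n => h j.castSucc)
  unfold Illegal Q0 Q1 Q2
  simp only [forall_lt_iff, exists_lt_iff, ne_eq, Fin.castSucc_inj]
  rcases h3 (h (Fin.last n)) with hc | hc | hc <;>
    simp [hc, e01, e02, e10, e12, e20, e21]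
  exact hsp.symm

theorem cyclical_illegal_card (hn : 2 ≤ n) :
    (univ.filter (Illegal n)).card = 2 ^ (n + 1) + (n + 1) := by
  classical
  have hpos : 0 < n := by omega
  have hcongr : univ.filter (Illegal n) = univ.filter (fun h : Fin (n+1) → Fin 3 =>
      (Q0 n (fun j : Fin n => h j.castSucc) ∧ h (Fin.last n) = 0) ∨
      (Q1 n (fun j : Fin n => h j.castSucc) ∧ h (Fin.last n) = 1) ∨
      (Q2 n (fun j : Fin n => h j.castSucc) ∧ h (Fin.last n) = 2)) := by
    apply Finset.filter_congr
    intro h _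
    simp only [illegal_iff]
  rw [hcongr, filter_or, filter_or]
  have d12 : Disjoint
      (univ.filter fun h : Fin (n+1) → Fin 3 =>
        Q1 n (fun j : Fin n => h j.castSucc) ∧ h (Fin.last n) = 1)
      (univ.filter fun h : Fin (n+1) → Fin 3 =>
        Q2 n (fun j : Fin n => h j.castSucc) ∧ h (Fin.last n) = 2) := by
    rw [Finset.disjoint_left]
    intro h hh hh'
    simp only [mem_filter, mem_univ, true_and] at hh hh'
    rw [hh.2] at hh'
    exact absurd hh'.2 (by decide)
  have d0 : Disjoint
      (univ.filter fun h : Fin (n+1) → Fin 3 =>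
        Q0 n (fun j : Fin n => h j.castSucc) ∧ h (Fin.last n) = 0)
      ((univ.filter fun h : Fin (n+1) → Fin 3 =>
        Q1 n (fun j : Fin n => h j.castSucc) ∧ h (Fin.last n) = 1) ∪
       (univ.filter fun h : Fin (n+1) → Fin 3 =>
        Q2 n (fun j : Fin n => h j.castSucc) ∧ h (Fin.last n) = 2)) := by
    rw [Finset.disjoint_left]
    intro h hh hh'
    simp only [mem_union, mem_filter, mem_univ, true_and] at hh hh'
    rcases hh' with hh' | hh' <;> rw [hh.2] at hh' <;> exact absurd hh'.2 (by decide)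
  rw [card_union_of_disjoint d0, card_union_of_disjoint d12]
  rw [slice_card (Q0 n) 0, slice_card (Q1 n) 1, slice_card (Q2 n) 2]
  have h0 : (univ.filter (Q0 n)).card = 2 ^ n := card_all12
  rw [h0, card_Q1 hpos, card_Q2 hpos, pow_succ]
  ring

end CyclicalAux

/-- The Cyclical Three Rows Game on `n + 1 ≥ 3` columns has `3^(n+1) - 2^(n+1) - (n+1)`
legal histories; in particular `2^(n+1) + (n+1)` illegal ones. -/
theorem cyclical_history_count (n : ℕ) (hn : 2 ≤ n) :
    Nat.card {h : Fin (n + 1) → Fin 3 // ¬ Illegal n h}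
        = 3 ^ (n + 1) - 2 ^ (n + 1) - (n + 1) ∧
    Nat.card {h : Fin (n + 1) → Fin 3 // Illegal n h} = 2 ^ (n + 1) + (n + 1) := by
  classical
  have hill : Nat.card {h : Fin (n + 1) → Fin 3 // Illegal n h} = 2 ^ (n + 1) + (n + 1) := by
    rw [Nat.card_eq_fintype_card, Fintype.card_subtype]
    exact CyclicalAux.cyclical_illegal_card hn
  refine ⟨?_, hill⟩
  have htot : Fintype.card (Fin (n + 1) → Fin 3) = 3 ^ (n + 1) := by
    simp [Fintype.card_fun]
  rw [Nat.card_eq_fintype_card, Fintype.card_subtype_compl, htot]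
  rw [← Nat.card_eq_fintype_card, hill, ← Nat.sub_sub]
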